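/- Let X and Y be topological spaces, φ : C_p(X) → C_p(Y) a uniformly continuous surjection, and suppose that to a point y ∈ Y one assigns a finite set K(y) ⊆ X and a real number a_y = sup{|φ(f)(y) − φ(g)(y)| : f, g ∈ C_p(X), ∀x ∈ K(y), |f(x) − g(x)| < 1} < ∞. Then for every n ∈ ℕ and f, g ∈ C_p(X): if |f(x) − g(x)| < n for each x ∈ K(y), then |φ(f)(y) − φ(g)(y)| ≤ n·a_y. -/

import Mathlib

/-- `C_p(X)`: continuous real-valued functions on `X` with the topology (and
uniformity) of pointwise convergence, realized as a subspace of `X → ℝ` with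
the product uniformity. -/
def Cp (X : Type*) [TopologicalSpace X] : Type _ := {f : X → ℝ // Continuous f}

instance (X : Type*) [TopologicalSpace X] : UniformSpace (Cp X) :=
  inferInstanceAs (UniformSpace {f : X → ℝ // Continuous f})

theorem gulko_support_lipschitz {X Y : Type*} [TopologicalSpace X] [TopologicalSpace Y]
    (φ : Cp X → Cp Y) (hφ : UniformContinuous φ) (hsurj : Function.Surjective φ)
    (y : Y) (K : Set X) (hK : K.Finite) (a : ℝ)
    (ha : IsLUB {r : ℝ | ∃ f g : Cp X,
        (∀ x ∈ K, |f.1 x - g.1 x| < 1) ∧ r = |(φ f).1 y - (φ g).1 y|} a)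
    (n : ℕ) (f g : Cp X) (hfg : ∀ x ∈ K, |f.1 x - g.1 x| < (n : ℝ)) :
    |(φ f).1 y - (φ g).1 y| ≤ (n : ℝ) * a := by
  rcases Nat.eq_zero_or_pos n with hn | hn
  · -- n = 0 : K must be empty, and then the set is unbounded, contradicting ha
    subst hn
    exfalso
    have hKempty : K = ∅ := by
      by_contra h
      obtain ⟨x, hx⟩ := Set.nonempty_iff_ne_empty.2 h
      have := hfg x hx
      simp at this
      exact absurd this (not_lt.2 (abs_nonneg _))
    -- pick u with φ u = constant (a + 1 + (φ f).1 y)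
    obtain ⟨u, hu⟩ := hsurj ⟨fun _ => a + 1 + (φ f).1 y, continuous_const⟩
    have hmem : |(φ u).1 y - (φ f).1 y| ∈ {r : ℝ | ∃ f g : Cp X,
        (∀ x ∈ K, |f.1 x - g.1 x| < 1) ∧ r = |(φ f).1 y - (φ g).1 y|} := by
      exact ⟨u, f, by simp [hKempty], rfl⟩
    have hle := ha.1 hmem
    rw [hu] at hle
    simp only at hle
    have : |a + 1 + (φ f).1 y - (φ f).1 y| = |a + 1| := by ring_nf
    rw [this] at hle
    have h0 : (0:ℝ) ≤ a := by
      have : (0:ℝ) ∈ {r : ℝ | ∃ f g : Cp X,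
          (∀ x ∈ K, |f.1 x - g.1 x| < 1) ∧ r = |(φ f).1 y - (φ g).1 y|} :=
        ⟨f, f, by simp [hKempty], by simp⟩
      exact ha.1 this
    have : a + 1 ≤ a := by
      calc a + 1 ≤ |a + 1| := le_abs_self _
        _ ≤ a := hle
    linarith
  · -- n ≥ 1 : telescoping
    have hn' : (0:ℝ) < n := by exact_mod_cast hn
    set F : ℕ → Cp X := fun k =>
      ⟨fun x => f.1 x + ((k : ℝ) / n) * (g.1 x - f.1 x), by
        exact f.2.add (continuous_const.mul (g.2.sub f.2))⟩ with hF
    have hF0 : F 0 = f := by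
      apply Subtype.ext; funext x; simp [hF]
    have hFn : F n = g := by
      apply Subtype.ext; funext x
      simp only [hF]
      field_simp
      ring
    have hstep : ∀ k, |(φ (F k)).1 y - (φ (F (k+1))).1 y| ≤ a := by
      intro k
      apply ha.1
      refine ⟨F k, F (k+1), ?_, rfl⟩
      intro x hx
      have : (F k).1 x - (F (k+1)).1 x = -(1 / n) * (g.1 x - f.1 x) := by
        simp only [hF]
        push_cast
        field_simp
        ring
      rw [this, abs_mul, abs_neg, abs_div, abs_one, abs_of_pos hn']
      rw [div_mul_eq_mul_div, one_mul, div_lt_one hn', abs_sub_comm]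
      exact hfg x hx
    have htel : (φ f).1 y - (φ g).1 y
        = ∑ k ∈ Finset.range n, ((φ (F k)).1 y - (φ (F (k+1))).1 y) := by
      rw [Finset.sum_range_sub' (fun k => (φ (F k)).1 y) n, hF0, hFn]
    rw [htel]
    calc |∑ k ∈ Finset.range n, ((φ (F k)).1 y - (φ (F (k+1))).1 y)|
        ≤ ∑ k ∈ Finset.range n, |(φ (F k)).1 y - (φ (F (k+1))).1 y| :=
          Finset.abs_sum_le_sum_abs _ _
      _ ≤ ∑ _k ∈ Finset.range n, a := Finset.sum_le_sum fun k _ => hstep k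
      _ = (n : ℝ) * a := by simp [mul_comm]
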